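/- Let x ∈ Ω, τ > 0, and let A ∈ ℝ^{m×n} be the forward finite-difference Jacobian approximation of F at x with stepsize τ. Then |ψ_{p,r}(x) − η_{p,r}(x;A)| ≤ (L_{h,p} L_J c_{p,2}(m) c_{2,p}(n) √n / 2) τ. -/

import Mathlib

open scoped ENNReal

noncomputable section

/-- The `p`-norm on `ℝ^n`, for `p ∈ [1,∞]`. -/
def pNorm (p : ℝ≥0∞) {n : ℕ} (x : Fin n → ℝ) : ℝ :=
  if p = ∞ then ⨆ i, |x i| else (∑ i, |x i| ^ p.toReal) ^ (1 / p.toReal)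

/-- The Euclidean norm on `ℝ^n`. -/
def eucNorm {n : ℕ} (x : Fin n → ℝ) : ℝ := Real.sqrt (∑ i, x i ^ 2)

/-- The operator norm of a matrix, induced by Euclidean norms. -/
def opNorm2 {m n : ℕ} (A : Matrix (Fin m) (Fin n) ℝ) : ℝ :=
  sSup ((fun v => eucNorm (A.mulVec v)) '' {v | eucNorm v ≤ 1})

/-- Forward finite-difference approximation of the Jacobian of `F` at `x` with stepsize `τ`:
the `j`-th column is `(F (x + τ e_j) - F x) / τ`. -/
def fdMatrix {n m : ℕ} (F : (Fin n → ℝ) → (Fin m → ℝ)) (x : Fin n → ℝ) (τ : ℝ) :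
    Matrix (Fin m) (Fin n) ℝ :=
  Matrix.of fun i j => (F (x + Pi.single j τ) i - F x i) / τ

/-- Stationarity measure `ψ_{p,r}(x)`. -/
def psi {n m : ℕ} (Ω : Set (Fin n → ℝ)) (F : (Fin n → ℝ) → (Fin m → ℝ))
    (h : (Fin m → ℝ) → ℝ) (J : (Fin n → ℝ) → Matrix (Fin m) (Fin n) ℝ)
    (p : ℝ≥0∞) (r : ℝ) (x : Fin n → ℝ) : ℝ :=
  r⁻¹ * (h (F x) -
    sInf ((fun s => h (F x + (J x).mulVec s)) '' {s | x + s ∈ Ω ∧ pNorm p s ≤ r}))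

/-- Approximate stationarity measure `η_{p,r}(x; A)`. -/
def eta {n m : ℕ} (Ω : Set (Fin n → ℝ)) (F : (Fin n → ℝ) → (Fin m → ℝ))
    (h : (Fin m → ℝ) → ℝ) (p : ℝ≥0∞) (r : ℝ) (x : Fin n → ℝ)
    (A : Matrix (Fin m) (Fin n) ℝ) : ℝ :=
  r⁻¹ * (h (F x) -
    sInf ((fun s => h (F x + A.mulVec s)) '' {s | x + s ∈ Ω ∧ pNorm p s ≤ r}))

namespace Stmt3Aux


lemma eucNorm_eq_norm {k : ℕ} (v : Fin k → ℝ) :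
    eucNorm v = ‖(WithLp.equiv 2 (Fin k → ℝ)).symm v‖ := by
  rw [EuclideanSpace.norm_eq]
  simp [eucNorm, WithLp.equiv_symm_apply, PiLp.toLp_apply, Real.norm_eq_abs, sq_abs]

lemma eucNorm_nonneg {k : ℕ} (v : Fin k → ℝ) : 0 ≤ eucNorm v := Real.sqrt_nonneg _

lemma eucNorm_smul {k : ℕ} (c : ℝ) (v : Fin k → ℝ) : eucNorm (c • v) = |c| * eucNorm v := by
  rw [eucNorm_eq_norm, eucNorm_eq_norm]
  rw [WithLp.equiv_symm_apply, WithLp.toLp_smul, norm_smul, Real.norm_eq_abs]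

lemma eucNorm_neg {k : ℕ} (v : Fin k → ℝ) : eucNorm (-v) = eucNorm v := by
  simp [eucNorm]

lemma abs_le_eucNorm {k : ℕ} (v : Fin k → ℝ) (j : Fin k) : |v j| ≤ eucNorm v := by
  rw [← Real.sqrt_sq_eq_abs]
  apply Real.sqrt_le_sqrt
  exact Finset.single_le_sum (f := fun i => v i ^ 2) (fun i _ => sq_nonneg _) (Finset.mem_univ j)

lemma mulVec_eq_sum {m n : ℕ} (M : Matrix (Fin m) (Fin n) ℝ) (s : Fin n → ℝ) :
    M.mulVec s = ∑ j, s j • (fun i => M i j) := by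
  funext i
  simp [Matrix.mulVec, dotProduct, Finset.sum_apply, mul_comm]

lemma eucNorm_mulVec_le {m n : ℕ} (M : Matrix (Fin m) (Fin n) ℝ) (s : Fin n → ℝ) :
    eucNorm (M.mulVec s) ≤ ∑ j, |s j| * eucNorm (fun i => M i j) := by
  rw [mulVec_eq_sum, eucNorm_eq_norm]
  have hmap : (WithLp.equiv 2 (Fin m → ℝ)).symm (∑ j, s j • (fun i => M i j))
      = ∑ j, s j • (WithLp.equiv 2 (Fin m → ℝ)).symm (fun i => M i j) := by
    rw [show ((WithLp.equiv 2 (Fin m → ℝ)).symm : (Fin m → ℝ) → EuclideanSpace ℝ (Fin m))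
        = (WithLp.linearEquiv 2 ℝ (Fin m → ℝ)).symm from rfl]
    rw [map_sum]
    simp
  rw [hmap]
  refine (norm_sum_le _ _).trans ?_
  apply Finset.sum_le_sum
  intro j _
  rw [norm_smul, Real.norm_eq_abs, eucNorm_eq_norm]

lemma eucNorm_mulVec_le_opNorm2 {m n : ℕ} (M : Matrix (Fin m) (Fin n) ℝ) (v : Fin n → ℝ) :
    eucNorm (M.mulVec v) ≤ opNorm2 M * eucNorm v := by
  have hbdd : BddAbove ((fun v => eucNorm (M.mulVec v)) '' {v | eucNorm v ≤ 1}) := by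
    refine ⟨∑ j, eucNorm (fun i => M i j), ?_⟩
    rintro _ ⟨w, hw, rfl⟩
    refine (eucNorm_mulVec_le M w).trans (Finset.sum_le_sum fun j _ => ?_)
    calc |w j| * eucNorm (fun i => M i j) ≤ 1 * eucNorm (fun i => M i j) :=
          mul_le_mul_of_nonneg_right ((abs_le_eucNorm w j).trans hw) (eucNorm_nonneg _)
      _ = eucNorm (fun i => M i j) := one_mul _
  rcases eq_or_ne (eucNorm v) 0 with h0 | h0
  · -- then v has all coords 0? eucNorm v = 0 → v = 0
    have hv : v = 0 := by
      have := eucNorm_eq_norm v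
      rw [h0] at this
      have h2 : (WithLp.equiv 2 (Fin n → ℝ)).symm v = 0 := norm_eq_zero.mp this.symm
      funext i
      have h3 := congrFun (congrArg (WithLp.equiv 2 (Fin n → ℝ)) h2) i
      simpa using h3
    simp [hv, eucNorm, Matrix.mulVec_zero]
  · have hpos : 0 < eucNorm v := lt_of_le_of_ne (eucNorm_nonneg v) (Ne.symm h0)
    have hmem : ((eucNorm v)⁻¹ • v) ∈ {v : Fin n → ℝ | eucNorm v ≤ 1} := by
      simp only [Set.mem_setOf_eq, eucNorm_smul, abs_inv, abs_of_pos hpos]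
      rw [inv_mul_cancel₀ h0]
    have hle : eucNorm (M.mulVec ((eucNorm v)⁻¹ • v)) ≤ opNorm2 M :=
      le_csSup hbdd ⟨_, hmem, rfl⟩
    rw [Matrix.mulVec_smul, eucNorm_smul, abs_inv, abs_of_pos hpos] at hle
    calc eucNorm (M.mulVec v) = (eucNorm v) * ((eucNorm v)⁻¹ * eucNorm (M.mulVec v)) := by
          field_simp
      _ ≤ eucNorm v * opNorm2 M := by
          exact mul_le_mul_of_nonneg_left hle (le_of_lt hpos)
      _ = opNorm2 M * eucNorm v := mul_comm _ _

lemma norm_EL {k : ℕ} (v : Fin k → ℝ) :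
    ‖(EuclideanSpace.equiv (Fin k) ℝ).symm v‖ = eucNorm v := (eucNorm_eq_norm v).symm

lemma taylor {n m : ℕ} (F : (Fin n → ℝ) → (Fin m → ℝ))
    (J : (Fin n → ℝ) → Matrix (Fin m) (Fin n) ℝ)
    (hJ : ∀ y, HasFDerivAt F (LinearMap.toContinuousLinearMap (Matrix.mulVecLin (J y))) y)
    (LJ : ℝ) (hJLip : ∀ y z, opNorm2 (J y - J z) ≤ LJ * eucNorm (y - z))
    (x u : Fin n → ℝ) :
    eucNorm (F (x + u) - F x - (J x).mulVec u) ≤ LJ / 2 * eucNorm u ^ 2 := by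
  set w := (J x).mulVec u with hw
  set EL : (Fin m → ℝ) →L[ℝ] EuclideanSpace ℝ (Fin m) :=
    ((EuclideanSpace.equiv (Fin m) ℝ).symm : (Fin m → ℝ) →L[ℝ] EuclideanSpace ℝ (Fin m)) with hEL
  have hELnorm : ∀ v : Fin m → ℝ, ‖EL v‖ = eucNorm v := fun v => norm_EL v
  set φ : ℝ → EuclideanSpace ℝ (Fin m) :=
    fun t => EL (F (x + t • u) - F x - t • w) with hφdef
  have hγ : ∀ t : ℝ, HasDerivAt (fun t : ℝ => x + t • u) u t := by
    intro t
    have := ((hasDerivAt_id t).smul_const u).const_add x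
    simpa using this
  have hφ : ∀ t : ℝ, HasDerivAt φ (EL ((J (x + t • u) - J x).mulVec u)) t := by
    intro t
    have hF : HasDerivAt (fun t : ℝ => F (x + t • u)) ((J (x + t • u)).mulVec u) t := by
      have := (hJ (x + t • u)).comp_hasDerivAt t (hγ t)
      simpa [Function.comp_def] using this
    have htw : HasDerivAt (fun t : ℝ => t • w) w t := by
      simpa using (hasDerivAt_id t).smul_const w
    have h2 : HasDerivAt (fun t : ℝ => F (x + t • u) - F x - t • w)
        ((J (x + t • u)).mulVec u - w) t := (hF.sub_const (F x)).sub htw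
    have h3 := EL.hasFDerivAt.comp_hasDerivAt t h2
    rw [Matrix.sub_mulVec]
    exact h3
  set B : ℝ → ℝ := fun t => LJ / 2 * eucNorm u ^ 2 * t ^ 2 with hB
  set B' : ℝ → ℝ := fun t => LJ * eucNorm u ^ 2 * t with hB'
  have hBderiv : ∀ t : ℝ, HasDerivAt B (B' t) t := by
    intro t
    have := (hasDerivAt_pow 2 t).const_mul (LJ / 2 * eucNorm u ^ 2)
    refine this.congr_deriv ?_
    simp [hB']
    ring
  have key : ∀ ⦃t : ℝ⦄, t ∈ Set.Icc (0:ℝ) 1 → ‖φ t‖ ≤ B t := by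
    refine image_norm_le_of_norm_deriv_right_le_deriv_boundary
      (f := φ) (f' := fun t => EL ((J (x + t • u) - J x).mulVec u))
      (fun t _ => (hφ t).continuousAt.continuousWithinAt)
      (fun t _ => (hφ t).hasDerivWithinAt) ?_ hBderiv ?_
    · simp [hφdef, hB]
    · intro t ht
      rw [hELnorm]
      calc eucNorm ((J (x + t • u) - J x).mulVec u)
          ≤ opNorm2 (J (x + t • u) - J x) * eucNorm u := eucNorm_mulVec_le_opNorm2 _ _
        _ ≤ (LJ * eucNorm ((x + t • u) - x)) * eucNorm u :=
            mul_le_mul_of_nonneg_right (hJLip _ _) (eucNorm_nonneg _)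
        _ = B' t := by
            rw [show (x + t • u) - x = t • u by abel, eucNorm_smul,
              abs_of_nonneg ht.1]
            simp [hB']
            ring
  have h1 := key (Set.mem_Icc.mpr ⟨zero_le_one, le_refl 1⟩)
  rw [hφdef] at h1
  simp only [one_smul] at h1
  rw [hELnorm] at h1
  simpa [hB] using h1

lemma eucNorm_single {k : ℕ} (j : Fin k) (τ : ℝ) : eucNorm (Pi.single j τ) = |τ| := by
  rw [eucNorm, show ∑ i, (Pi.single j τ : Fin k → ℝ) i ^ 2 = τ ^ 2 from ?_,
    Real.sqrt_sq_eq_abs]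
  rw [Finset.sum_eq_single j]
  · simp
  · intro b _ hb; simp [Pi.single_apply, hb]
  · intro hj; exact absurd (Finset.mem_univ j) hj

lemma pNorm_zero {k : ℕ} (p : ℝ≥0∞) (hp : 1 ≤ p) : pNorm p (0 : Fin k → ℝ) = 0 := by
  rw [pNorm]
  split_ifs with h
  · simp only [Pi.zero_apply, abs_zero]
    exact Real.iSup_const_zero
  · have hp0 : p ≠ 0 := by
      intro h0; rw [h0] at hp; exact absurd hp (by simp)
    have ht : 0 < p.toReal := ENNReal.toReal_pos hp0 h
    simp only [Pi.zero_apply, abs_zero, Real.zero_rpow (ne_of_gt ht)]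
    rw [Finset.sum_const, smul_zero, Real.zero_rpow]
    simp [ne_of_gt ht]

lemma abs_sInf_image_sub_le {α : Type*} {T : Set α} (hT : T.Nonempty)
    {f g : α → ℝ} {δ : ℝ} (hf : BddBelow (f '' T)) (hg : BddBelow (g '' T))
    (hfg : ∀ t ∈ T, |f t - g t| ≤ δ) :
    |sInf (f '' T) - sInf (g '' T)| ≤ δ := by
  have h1 : sInf (f '' T) - δ ≤ sInf (g '' T) := by
    refine le_csInf (hT.image g) ?_
    rintro _ ⟨t, ht, rfl⟩
    have h2 : sInf (f '' T) ≤ f t := csInf_le hf ⟨t, ht, rfl⟩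
    have h3 := (abs_le.mp (hfg t ht)).2
    linarith
  have h4 : sInf (g '' T) - δ ≤ sInf (f '' T) := by
    refine le_csInf (hT.image f) ?_
    rintro _ ⟨t, ht, rfl⟩
    have h2 : sInf (g '' T) ≤ g t := csInf_le hg ⟨t, ht, rfl⟩
    have h3 := (abs_le.mp (hfg t ht)).1
    linarith
  rw [abs_sub_le_iff]
  constructor <;> linarith

lemma bdd_below_image {n m : ℕ} (Ω : Set (Fin n → ℝ)) (F : (Fin n → ℝ) → (Fin m → ℝ))
    (h : (Fin m → ℝ) → ℝ) (p : ℝ≥0∞) (Lh : ℝ) (hLh : 0 ≤ Lh)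
    (hhLip : ∀ z w, |h z - h w| ≤ Lh * pNorm p (z - w))
    (cnp cpm r : ℝ) (hcnp0 : 0 ≤ cnp) (hcpm0 : 0 ≤ cpm)
    (hcnp : ∀ v : Fin n → ℝ, eucNorm v ≤ cnp * pNorm p v)
    (hcpm : ∀ z : Fin m → ℝ, pNorm p z ≤ cpm * eucNorm z)
    (x : Fin n → ℝ) (M : Matrix (Fin m) (Fin n) ℝ) :
    BddBelow ((fun s => h (F x + M.mulVec s)) '' {s | x + s ∈ Ω ∧ pNorm p s ≤ r}) := by
  set C := ∑ j, eucNorm (fun i => M i j) with hC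
  refine ⟨h (F x) - Lh * (cpm * (C * (cnp * r))), ?_⟩
  rintro _ ⟨s, ⟨hs1, hs2⟩, rfl⟩
  have hs3 : eucNorm s ≤ cnp * r := (hcnp s).trans (mul_le_mul_of_nonneg_left hs2 hcnp0)
  have h4 : |h (F x + M.mulVec s) - h (F x)| ≤ Lh * pNorm p (M.mulVec s) := by
    have := hhLip (F x + M.mulVec s) (F x)
    simpa using this
  have h6 : eucNorm (M.mulVec s) ≤ C * (cnp * r) := by
    refine (eucNorm_mulVec_le M s).trans ?_
    calc ∑ j, |s j| * eucNorm (fun i => M i j)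
        ≤ ∑ j, (cnp * r) * eucNorm (fun i => M i j) :=
          Finset.sum_le_sum fun j _ => mul_le_mul_of_nonneg_right
            ((abs_le_eucNorm s j).trans hs3) (eucNorm_nonneg _)
      _ = C * (cnp * r) := by rw [← Finset.mul_sum, hC, mul_comm]
  have h7 : Lh * pNorm p (M.mulVec s) ≤ Lh * (cpm * (C * (cnp * r))) := by
    refine mul_le_mul_of_nonneg_left ((hcpm _).trans ?_) hLh
    exact mul_le_mul_of_nonneg_left h6 hcpm0
  have h8 := (abs_le.mp h4).1
  linarith

lemma sum_abs_le_sqrt_mul {k : ℕ} (s : Fin k → ℝ) :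
    ∑ j, |s j| ≤ Real.sqrt k * eucNorm s := by
  have h := Real.sum_mul_le_sqrt_mul_sqrt Finset.univ (fun _ => (1 : ℝ)) (fun j => |s j|)
  simp only [one_mul, one_pow, Finset.sum_const, Finset.card_univ, Fintype.card_fin,
    nsmul_eq_mul, mul_one, sq_abs] at h
  rw [eucNorm]
  exact h

lemma fd_col_bound {n m : ℕ} (F : (Fin n → ℝ) → (Fin m → ℝ))
    (J : (Fin n → ℝ) → Matrix (Fin m) (Fin n) ℝ)
    (hJ : ∀ y, HasFDerivAt F (LinearMap.toContinuousLinearMap (Matrix.mulVecLin (J y))) y)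
    (LJ : ℝ) (hJLip : ∀ y z, opNorm2 (J y - J z) ≤ LJ * eucNorm (y - z))
    (x : Fin n → ℝ) (τ : ℝ) (hτ : 0 < τ) (j : Fin n) :
    eucNorm (fun i => (J x - fdMatrix F x τ) i j) ≤ LJ * τ / 2 := by
  have hu := taylor F J hJ LJ hJLip x (Pi.single j τ)
  rw [eucNorm_single, abs_of_pos hτ] at hu
  have hcol : (fun i => (J x - fdMatrix F x τ) i j)
      = (-τ⁻¹) • (F (x + Pi.single j τ) - F x - (J x).mulVec (Pi.single j τ)) := by
    funext i
    have hmv : (J x).mulVec (Pi.single j τ) i = J x i j * τ := by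
      simp [Matrix.mulVec, dotProduct, Pi.single_apply, Finset.sum_ite_eq']
    have hfd : fdMatrix F x τ i j = (F (x + Pi.single j τ) i - F x i) / τ := rfl
    simp only [Matrix.sub_apply, hfd, Pi.smul_apply, Pi.sub_apply, hmv, smul_eq_mul]
    field_simp
    ring
  rw [hcol, eucNorm_smul, abs_neg, abs_inv, abs_of_pos hτ]
  have hend : τ⁻¹ * (LJ / 2 * τ ^ 2) = LJ * τ / 2 := by
    field_simp
  exact le_trans (mul_le_mul_of_nonneg_left hu (inv_nonneg.mpr hτ.le)) (le_of_eq hend)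
lemma diff_mulVec_bound {n m : ℕ} (F : (Fin n → ℝ) → (Fin m → ℝ))
    (J : (Fin n → ℝ) → Matrix (Fin m) (Fin n) ℝ)
    (hJ : ∀ y, HasFDerivAt F (LinearMap.toContinuousLinearMap (Matrix.mulVecLin (J y))) y)
    (LJ : ℝ) (hLJ : 0 ≤ LJ) (hJLip : ∀ y z, opNorm2 (J y - J z) ≤ LJ * eucNorm (y - z))
    (x : Fin n → ℝ) (τ : ℝ) (hτ : 0 < τ) (s : Fin n → ℝ) :
    eucNorm ((J x - fdMatrix F x τ).mulVec s) ≤ LJ * τ / 2 * (Real.sqrt n * eucNorm s) := by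
  refine (eucNorm_mulVec_le _ s).trans ?_
  have h1 : ∑ j, |s j| * eucNorm (fun i => (J x - fdMatrix F x τ) i j)
      ≤ ∑ j, |s j| * (LJ * τ / 2) :=
    Finset.sum_le_sum fun j _ =>
      mul_le_mul_of_nonneg_left (fd_col_bound F J hJ LJ hJLip x τ hτ j) (abs_nonneg _)
  refine h1.trans ?_
  rw [← Finset.sum_mul]
  have h3 : (0:ℝ) ≤ LJ * τ / 2 := by positivity
  calc (∑ j, |s j|) * (LJ * τ / 2)
      ≤ (Real.sqrt n * eucNorm s) * (LJ * τ / 2) :=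
        mul_le_mul_of_nonneg_right (sum_abs_le_sqrt_mul s) h3
    _ = LJ * τ / 2 * (Real.sqrt n * eucNorm s) := by ring

end Stmt3Aux

/-- Lemma 2.5: error between ψ and η for the finite-difference matrix. -/
theorem stmt3
    {n m : ℕ} (hn : 1 ≤ n) (hm : 1 ≤ m) (p : ℝ≥0∞) (hp : 1 ≤ p)
    (Ω : Set (Fin n → ℝ)) (hΩne : Ω.Nonempty) (hΩcl : IsClosed Ω) (hΩcv : Convex ℝ Ω)
    (F : (Fin n → ℝ) → (Fin m → ℝ)) (J : (Fin n → ℝ) → Matrix (Fin m) (Fin n) ℝ)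
    (hJ : ∀ y, HasFDerivAt F (LinearMap.toContinuousLinearMap (Matrix.mulVecLin (J y))) y)
    (LJ : ℝ) (hLJ : 0 < LJ)
    (hJLip : ∀ y z, opNorm2 (J y - J z) ≤ LJ * eucNorm (y - z))
    (h : (Fin m → ℝ) → ℝ) (hconv : ConvexOn ℝ Set.univ h)
    (Lh : ℝ) (hLh : 0 < Lh)
    (hhLip : ∀ z w, |h z - h w| ≤ Lh * pNorm p (z - w))
    (cnp cpm : ℝ) (hcnp1 : 1 ≤ cnp) (hcpm1 : 1 ≤ cpm)
    (hcnp : ∀ v : Fin n → ℝ, eucNorm v ≤ cnp * pNorm p v)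
    (hcpm : ∀ z : Fin m → ℝ, pNorm p z ≤ cpm * eucNorm z)
    (r : ℝ) (hr : 0 < r) (x : Fin n → ℝ) (hx : x ∈ Ω) (τ : ℝ) (hτ : 0 < τ) :
    |psi Ω F h J p r x - eta Ω F h p r x (fdMatrix F x τ)| ≤
      Lh * LJ * cpm * cnp * Real.sqrt n / 2 * τ := by
  classical
  have hcnp0 : (0:ℝ) ≤ cnp := le_trans zero_le_one hcnp1
  have hcpm0 : (0:ℝ) ≤ cpm := le_trans zero_le_one hcpm1
  set A := fdMatrix F x τ with hA
  set T : Set (Fin n → ℝ) := {s | x + s ∈ Ω ∧ pNorm p s ≤ r} with hTdef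
  have hT0 : (0 : Fin n → ℝ) ∈ T := by
    refine ⟨by simpa using hx, ?_⟩
    rw [Stmt3Aux.pNorm_zero p hp]; exact hr.le
  have hTne : T.Nonempty := ⟨0, hT0⟩
  set f : (Fin n → ℝ) → ℝ := fun s => h (F x + (J x).mulVec s) with hfdef
  set g : (Fin n → ℝ) → ℝ := fun s => h (F x + A.mulVec s) with hgdef
  have hbf : BddBelow (f '' T) :=
    Stmt3Aux.bdd_below_image Ω F h p Lh hLh.le hhLip cnp cpm r hcnp0 hcpm0 hcnp hcpm x (J x)
  have hbg : BddBelow (g '' T) :=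
    Stmt3Aux.bdd_below_image Ω F h p Lh hLh.le hhLip cnp cpm r hcnp0 hcpm0 hcnp hcpm x A
  set δ : ℝ := Lh * (cpm * (LJ * τ / 2 * (Real.sqrt n * (cnp * r)))) with hδ
  have hpt : ∀ s ∈ T, |f s - g s| ≤ δ := by
    intro s hs
    have hs3 : eucNorm s ≤ cnp * r :=
      (hcnp s).trans (mul_le_mul_of_nonneg_left hs.2 hcnp0)
    have h1 : |f s - g s| ≤ Lh * pNorm p ((J x - A).mulVec s) := by
      have := hhLip (F x + (J x).mulVec s) (F x + A.mulVec s)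
      rw [show (F x + (J x).mulVec s) - (F x + A.mulVec s) = (J x - A).mulVec s by
        rw [Matrix.sub_mulVec]; abel] at this
      exact this
    have h2 : eucNorm ((J x - A).mulVec s) ≤ LJ * τ / 2 * (Real.sqrt n * eucNorm s) :=
      Stmt3Aux.diff_mulVec_bound F J hJ LJ hLJ.le hJLip x τ hτ s
    have h3 : eucNorm ((J x - A).mulVec s) ≤ LJ * τ / 2 * (Real.sqrt n * (cnp * r)) := by
      refine h2.trans ?_
      have : Real.sqrt n * eucNorm s ≤ Real.sqrt n * (cnp * r) :=
        mul_le_mul_of_nonneg_left hs3 (Real.sqrt_nonneg _)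
      exact mul_le_mul_of_nonneg_left this (by positivity)
    refine h1.trans ?_
    rw [hδ]
    refine mul_le_mul_of_nonneg_left ?_ hLh.le
    exact (hcpm _).trans (mul_le_mul_of_nonneg_left h3 hcpm0)
  have hInf : |sInf (f '' T) - sInf (g '' T)| ≤ δ :=
    Stmt3Aux.abs_sInf_image_sub_le hTne hbf hbg hpt
  have heq : psi Ω F h J p r x - eta Ω F h p r x A
      = r⁻¹ * (sInf (g '' T) - sInf (f '' T)) := by
    rw [psi, eta, hTdef, hfdef, hgdef]
    ring
  rw [heq, abs_mul, abs_of_pos (inv_pos.mpr hr), abs_sub_comm]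
  calc r⁻¹ * |sInf (f '' T) - sInf (g '' T)| ≤ r⁻¹ * δ :=
        mul_le_mul_of_nonneg_left hInf (inv_nonneg.mpr hr.le)
    _ = Lh * LJ * cpm * cnp * Real.sqrt n / 2 * τ := by
        rw [hδ]; field_simp
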